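/- For the classical Kepler problem, the Runge–Lenz vector satisfies {M_i, M_j} = −2H ε_{ijk} L_k, where H = |p|²/2 − 1/|r|. -/

import Mathlib

noncomputable section

/-- Phase space ℝ³ × ℝ³ with coordinates (r, p). -/
abbrev Phase := (Fin 3 → ℝ) × (Fin 3 → ℝ)

/-- The standard Poisson bracket {f,g} = Σ_k (∂f/∂r_k ∂g/∂p_k − ∂f/∂p_k ∂g/∂r_k). -/
def pb (f g : Phase → ℝ) (x : Phase) : ℝ :=
  ∑ k : Fin 3,
    (fderiv ℝ f x (Pi.single k 1, 0) * fderiv ℝ g x (0, Pi.single k 1)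
      - fderiv ℝ f x (0, Pi.single k 1) * fderiv ℝ g x (Pi.single k 1, 0))

/-- The Levi-Civita symbol on Fin 3. -/
def eps (i j k : Fin 3) : ℝ :=
  if (i, j, k) ∈ [((0 : Fin 3), (1 : Fin 3), (2 : Fin 3)), (1, 2, 0), (2, 0, 1)] then 1
  else if (i, j, k) ∈ [((0 : Fin 3), (2 : Fin 3), (1 : Fin 3)), (2, 1, 0), (1, 0, 2)] then -1
  else 0

/-- Euclidean norm on ℝ³. -/
def euclNorm (v : Fin 3 → ℝ) : ℝ := Real.sqrt (∑ k : Fin 3, v k ^ 2)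

/-- Euclidean dot product on ℝ³. -/
def edot (v w : Fin 3 → ℝ) : ℝ := ∑ k : Fin 3, v k * w k

/-- Angular momentum L_i = ε_{ijk} r_j p_k. -/
def angL (i : Fin 3) (x : Phase) : ℝ :=
  ∑ j : Fin 3, ∑ k : Fin 3, eps i j k * x.1 j * x.2 k

/-- The Kepler Hamiltonian H = |p|²/2 − 1/|r|. -/
def ham (x : Phase) : ℝ := (∑ k : Fin 3, x.2 k ^ 2) / 2 - 1 / euclNorm x.1

/-- The Runge–Lenz vector M = p × L − r/|r|. -/
def rlM (i : Fin 3) (x : Phase) : ℝ :=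
  (∑ j : Fin 3, ∑ k : Fin 3, eps i j k * x.2 j * angL k x) - x.1 i / euclNorm x.1

/-- BAC-CAB form of the Runge–Lenz vector. -/
lemma rlM_eq (i : Fin 3) : rlM i = fun x : Phase =>
    x.1 i * (∑ m : Fin 3, x.2 m ^ 2) - x.2 i * (∑ m : Fin 3, x.1 m * x.2 m)
      - x.1 i * (euclNorm x.1)⁻¹ := by
  funext y
  fin_cases i <;> simp [rlM, angL, eps, Fin.sum_univ_three, div_eq_mul_inv] <;> ring

/-- Coordinate projection r_k as a continuous linear map. -/
def Rc (k : Fin 3) : Phase →L[ℝ] ℝ :=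
  (ContinuousLinearMap.proj k).comp (ContinuousLinearMap.fst ℝ (Fin 3 → ℝ) (Fin 3 → ℝ))

/-- Coordinate projection p_k as a continuous linear map. -/
def Pc (k : Fin 3) : Phase →L[ℝ] ℝ :=
  (ContinuousLinearMap.proj k).comp (ContinuousLinearMap.snd ℝ (Fin 3 → ℝ) (Fin 3 → ℝ))

lemma Rc_apply (k : Fin 3) (v : Phase) : Rc k v = v.1 k := rfl
lemma Pc_apply (k : Fin 3) (v : Phase) : Pc k v = v.2 k := rfl

/-- Directional derivative of the Runge–Lenz vector. -/
lemma hval (i : Fin 3) (x : Phase) (hs : (0:ℝ) < ∑ m : Fin 3, x.1 m ^ 2) (v : Phase) :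
    fderiv ℝ (rlM i) x v =
      v.1 i * (∑ m : Fin 3, x.2 m ^ 2)
        + x.1 i * (∑ m : Fin 3, 2 * x.2 m * v.2 m)
        - v.2 i * (∑ m : Fin 3, x.1 m * x.2 m)
        - x.2 i * (∑ m : Fin 3, (x.1 m * v.2 m + x.2 m * v.1 m))
        - v.1 i / euclNorm x.1
        + x.1 i * (∑ m : Fin 3, x.1 m * v.1 m) / euclNorm x.1 ^ 3 := by
  have hR : ∀ m : Fin 3, HasFDerivAt (fun y : Phase => y.1 m) (Rc m) x :=
    fun m => (Rc m).hasFDerivAt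
  have hP : ∀ m : Fin 3, HasFDerivAt (fun y : Phase => y.2 m) (Pc m) x :=
    fun m => (Pc m).hasFDerivAt
  have hnpos : 0 < euclNorm x.1 := Real.sqrt_pos.mpr hs
  have hn : euclNorm x.1 ≠ 0 := hnpos.ne'
  have hrsum : HasFDerivAt (fun y : Phase => ∑ m : Fin 3, y.1 m ^ 2)
      (∑ m : Fin 3, (x.1 m • Rc m + x.1 m • Rc m)) x :=
    HasFDerivAt.fun_sum (fun m _ => by simpa [pow_two] using (hR m).fun_mul (hR m))
  have hpsum : HasFDerivAt (fun y : Phase => ∑ m : Fin 3, y.2 m ^ 2)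
      (∑ m : Fin 3, (x.2 m • Pc m + x.2 m • Pc m)) x :=
    HasFDerivAt.fun_sum (fun m _ => by simpa [pow_two] using (hP m).fun_mul (hP m))
  have hrp : HasFDerivAt (fun y : Phase => ∑ m : Fin 3, y.1 m * y.2 m)
      (∑ m : Fin 3, (x.1 m • Pc m + x.2 m • Rc m)) x :=
    HasFDerivAt.fun_sum (fun m _ => (hR m).mul (hP m))
  have hN : HasFDerivAt (fun y : Phase => euclNorm y.1)
      ((1 / (2 * euclNorm x.1)) • (∑ m : Fin 3, (x.1 m • Rc m + x.1 m • Rc m))) x := by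
    have := (Real.hasDerivAt_sqrt hs.ne').comp_hasFDerivAt x hrsum
    simpa [euclNorm, Function.comp_def] using this
  have hinv : HasFDerivAt (fun y : Phase => (euclNorm y.1)⁻¹)
      ((-(euclNorm x.1 ^ 2)⁻¹) •
        ((1 / (2 * euclNorm x.1)) • (∑ m : Fin 3, (x.1 m • Rc m + x.1 m • Rc m)))) x :=
    (hasDerivAt_inv hn).comp_hasFDerivAt x hN
  have hg := (((hR i).fun_mul hpsum).fun_sub ((hP i).fun_mul hrp)).fun_sub ((hR i).fun_mul hinv)
  rw [rlM_eq i, hg.fderiv]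
  simp only [ContinuousLinearMap.sub_apply, ContinuousLinearMap.add_apply,
    ContinuousLinearMap.smul_apply, ContinuousLinearMap.sum_apply, Rc_apply, Pc_apply,
    smul_eq_mul, Fin.sum_univ_three]
  field_simp
  ring

set_option maxHeartbeats 4000000 in
/-- {M_i, M_j} = −2H ε_{ijk} L_k on the region r ≠ 0. -/
theorem poisson_rlM_rlM (i j : Fin 3) (x : Phase) (hx : x.1 ≠ 0) :
    pb (rlM i) (rlM j) x = -2 * ham x * ∑ k : Fin 3, eps i j k * angL k x := by
  have hs0 : (0:ℝ) < ∑ m : Fin 3, x.1 m ^ 2 := by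
    obtain ⟨k, hk⟩ : ∃ k, x.1 k ≠ 0 := by
      by_contra h; push_neg at h; exact hx (funext h)
    exact Finset.sum_pos' (fun m _ => sq_nonneg _) ⟨k, Finset.mem_univ k, by positivity⟩
  have hnpos : 0 < euclNorm x.1 := Real.sqrt_pos.mpr hs0
  have hn : euclNorm x.1 ≠ 0 := hnpos.ne'
  have hn2 : euclNorm x.1 ^ 2 = ∑ m : Fin 3, x.1 m ^ 2 := Real.sq_sqrt hs0.le
  have hn3 : euclNorm x.1 ^ 3 = euclNorm x.1 * (x.1 0 ^ 2 + x.1 1 ^ 2 + x.1 2 ^ 2) := by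
    rw [pow_succ, pow_succ, pow_one, ← pow_two, hn2, Fin.sum_univ_three]; ring
  have hsne : x.1 0 ^ 2 + x.1 1 ^ 2 + x.1 2 ^ 2 ≠ 0 := by
    rw [← Fin.sum_univ_three (fun m => x.1 m ^ 2)]; exact hs0.ne'
  fin_cases i <;> fin_cases j <;>
    · simp only [pb, hval _ x hs0]
      simp [ham, angL, eps, Fin.sum_univ_three, Pi.single_apply, hn3]
      field_simp
      ring
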